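/- arXiv:2507.08685 — 2 statements merged into one kernel-verified Lean document; each statement's English description precedes it below -/
import Mathlib

section
/- Let τ[b] be the earliest-arrival time from a source x to each beer vertex b within [t_α, t_ω], and for each b let t[b] := min{ time ∈ T_b : time ≥ τ[b] } (∞ if none exists or if t[b] > t_ω). Then for every vertex v, the earliest-arrival beer path time from x to v within [t_α, t_ω] equals the multiple-source earliest-arrival time to v with initial times init[b] = t[b] for b ∈ B and init[u] = ∞ for u ∉ B. -/
open scoped Classical

structure TEdge (V : Type) where
  src : V
  dst : V
  t : ℝ
  len : ℝ

variable {V : Type}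

/-- Consecutive compatibility of temporal edges. -/
def compat (e f : TEdge V) : Prop := e.dst = f.src ∧ e.t + e.len ≤ f.t

/-- A temporal path from `x` to `y`: a nonempty list of temporal edges of `E`,
starting at `x`, ending at `y`, consecutively compatible. -/
def IsPath (E : Set (TEdge V)) (x y : V) (p : List (TEdge V)) : Prop :=
  p ≠ [] ∧ (∀ e ∈ p, e ∈ E) ∧ p.head?.map TEdge.src = some x ∧
    p.getLast?.map TEdge.dst = some y ∧ List.Chain' compat p

/-- Starting time of a temporal path. -/
def startT (p : List (TEdge V)) : ℝ := ((p.head?).map TEdge.t).getD 0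

/-- Ending (arrival) time of a temporal path. -/
def endT (p : List (TEdge V)) : ℝ := ((p.getLast?).map (fun e => e.t + e.len)).getD 0

/-- Distance (sum of traversal times) of a temporal path. -/
def distT (p : List (TEdge V)) : ℝ := (p.map TEdge.len).sum

/-- The earliest-arrival time from `x` to `b` within `[tα, tω]`
(`tα` if `b = x`, i.e. we are already at the source at time `tα`). -/
noncomputable def eaArr (E : Set (TEdge V)) (x : V) (tα tω : ℝ) (b : V) : EReal :=
  sInf {a : EReal | (b = x ∧ a = (tα : EReal)) ∨
    ∃ p, IsPath E x b p ∧ tα ≤ startT p ∧ endT p ≤ tω ∧ a = ((endT p : ℝ) : EReal)}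

/-- `t[b]`: the minimum active time of beer vertex `b` that is no earlier than
its earliest-arrival time and no later than `tω` (⊤ if none, or if `b ∉ B`). -/
noncomputable def beerInit (E : Set (TEdge V)) (B : Set V) (T : V → Set ℝ)
    (x : V) (tα tω : ℝ) : V → EReal :=
  fun b =>
    if b ∈ B then
      sInf {s : EReal | ∃ time ∈ T b, eaArr E x tα tω b ≤ (time : EReal) ∧
        time ≤ tω ∧ s = (time : EReal)}
    else ⊤

/-- The earliest-arrival beer path time from `x` to `v` within `[tα, tω]`:
the minimum time at which one can be at `v` having visited some beer vertex
`b ∈ B` at an active time `t ∈ T b` (reaching `b` from `x` no later than `t`,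
then reaching `v` from `b` departing no earlier than `t`). -/
noncomputable def beerEaTime (E : Set (TEdge V)) (B : Set V) (T : V → Set ℝ)
    (x : V) (tα tω : ℝ) (v : V) : EReal :=
  sInf {a : EReal | ∃ b ∈ B, ∃ t ∈ T b, tα ≤ t ∧ t ≤ tω ∧
    (b = x ∨ ∃ q, IsPath E x b q ∧ tα ≤ startT q ∧ endT q ≤ t) ∧
    ((v = b ∧ a = (t : EReal)) ∨
      ∃ r, IsPath E b v r ∧ t ≤ startT r ∧ endT r ≤ tω ∧ a = ((endT r : ℝ) : EReal))}


/-! ### Auxiliary lemmas -/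

lemma startT_le_endT : ∀ (p : List (TEdge V)), p ≠ [] → (∀ e ∈ p, 0 ≤ e.len) →
    List.Chain' compat p → startT p ≤ endT p
  | [], h, _, _ => absurd rfl h
  | [e], _, hlen, _ => by
      have := hlen e (by simp)
      simp only [startT, endT, List.head?_cons, List.getLast?_singleton, Option.map_some,
        Option.getD_some]
      linarith
  | e :: f :: l, _, hlen, hc => by
      have hc' := (List.isChain_cons_cons.mp hc)
      have ih := startT_le_endT (f :: l) (by simp)
        (fun g hg => hlen g (List.mem_cons_of_mem _ hg)) hc'.2
      have h1 : e.t ≤ f.t := by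
        have h2 := hc'.1.2
        have h3 := hlen e (by simp)
        linarith
      have hs : startT (e :: f :: l) = e.t := by simp [startT]
      have hs2 : startT (f :: l) = f.t := by simp [startT]
      have he : endT (e :: f :: l) = endT (f :: l) := by
        simp [endT, List.getLast?_cons_cons]
      rw [hs, he]; rw [hs2] at ih; linarith

lemma chain_t_lt : ∀ (p : List (TEdge V)), (∀ e ∈ p, 0 < e.len) →
    List.Chain' compat p → List.Chain' (fun a b : TEdge V => a.t < b.t) p
  | [], _, _ => List.IsChain.nil
  | [e], _, _ => List.isChain_singleton e
  | e :: f :: l, hlen, hc => by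
      have hc' := List.isChain_cons_cons.mp hc
      refine List.isChain_cons_cons.mpr ⟨?_, chain_t_lt (f :: l)
        (fun g hg => hlen g (List.mem_cons_of_mem _ hg)) hc'.2⟩
      have h2 := hc'.1.2
      have h3 := hlen e (by simp)
      linarith

lemma path_nodup (p : List (TEdge V)) (hlen : ∀ e ∈ p, 0 < e.len)
    (hc : List.Chain' compat p) : p.Nodup := by
  have h := chain_t_lt p hlen hc
  have h2 : List.Chain' (· < ·) (p.map TEdge.t) := (List.isChain_map _).mpr h
  have h3 : List.Pairwise (· < ·) (p.map TEdge.t) := List.isChain_iff_pairwise.mp h2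
  have h4 : (p.map TEdge.t).Nodup := h3.imp ne_of_lt
  exact h4.of_map _

lemma paths_finite {E : Set (TEdge V)} (hE : E.Finite) (hpos : ∀ e ∈ E, 0 < e.len) (x y : V) :
    {p : List (TEdge V) | IsPath E x y p}.Finite := by
  have : Finite ↥E := hE.to_subtype
  have hfin : {l : List ↥E | l.length ≤ hE.toFinset.card}.Finite := List.finite_length_le _ _
  apply Set.Finite.subset (hfin.image (List.map (Subtype.val)))
  rintro p ⟨hne, hmem, -, -, hchain⟩
  have hnd : p.Nodup := path_nodup p (fun e he => hpos e (hmem e he)) hchain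
  refine ⟨p.pmap (fun e h => (⟨e, h⟩ : ↥E)) hmem, ?_, ?_⟩
  · simp only [Set.mem_setOf_eq, List.length_pmap]
    have h1 : p.toFinset.card = p.length := List.toFinset_card_of_nodup hnd
    have h2 : p.toFinset ⊆ hE.toFinset := by
      intro e he
      rw [List.mem_toFinset] at he
      simpa using hmem e he
    calc p.length = p.toFinset.card := h1.symm
      _ ≤ _ := Finset.card_le_card h2
  · rw [List.map_pmap, List.pmap_eq_map]
    exact List.map_id p

lemma tα_le_eaArr {E : Set (TEdge V)} (hpos : ∀ e ∈ E, 0 < e.len) (x : V) (tα tω : ℝ) (b : V) :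
    (tα : EReal) ≤ eaArr E x tα tω b := by
  apply le_sInf
  rintro a (⟨-, rfl⟩ | ⟨p, hp, hs, he, rfl⟩)
  · exact le_refl _
  · have h := startT_le_endT p hp.1 (fun e he => le_of_lt (hpos e (hp.2.1 e he))) hp.2.2.2.2
    exact EReal.coe_le_coe_iff.mpr (le_trans hs h)

lemma eaArr_reach {E : Set (TEdge V)} (hE : E.Finite) (hpos : ∀ e ∈ E, 0 < e.len)
    {x : V} {tα tω : ℝ} {b : V} {c : ℝ} (h : eaArr E x tα tω b ≤ (c : EReal)) :
    b = x ∨ ∃ p, IsPath E x b p ∧ tα ≤ startT p ∧ endT p ≤ tω ∧ endT p ≤ c := by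
  set S : Set EReal := {a : EReal | (b = x ∧ a = (tα : EReal)) ∨
    ∃ p, IsPath E x b p ∧ tα ≤ startT p ∧ endT p ≤ tω ∧ a = ((endT p : ℝ) : EReal)} with hS
  have hfin : S.Finite := by
    apply Set.Finite.subset
      (Set.Finite.insert ((tα : ℝ) : EReal)
        ((paths_finite hE hpos x b).image (fun p => ((endT p : ℝ) : EReal))))
    rintro a (⟨-, rfl⟩ | ⟨p, hp, -, -, rfl⟩)
    · exact Set.mem_insert _ _
    · exact Set.mem_insert_of_mem _ ⟨p, hp, rfl⟩
  have hne : S.Nonempty := by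
    by_contra hcon
    rw [Set.not_nonempty_iff_eq_empty] at hcon
    have h2 : eaArr E x tα tω b = ⊤ := by rw [eaArr, ← hS, hcon, sInf_empty]
    rw [h2, top_le_iff] at h
    exact EReal.coe_ne_top c h
  have hmem : sInf S ∈ S := Set.Nonempty.csInf_mem hne hfin
  have heq : eaArr E x tα tω b = sInf S := by rw [eaArr, ← hS]
  rcases hmem with ⟨hbx, -⟩ | ⟨p, hp, hs, hw, hval⟩
  · exact Or.inl hbx
  · refine Or.inr ⟨p, hp, hs, hw, ?_⟩
    rw [heq, hval] at h
    exact EReal.coe_le_coe_iff.mp h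

lemma beerInit_reach {E : Set (TEdge V)} {B : Set V} {T : V → Set ℝ} (hT : ∀ b, (T b).Finite)
    {x : V} {tα tω : ℝ} {w : V} {c : ℝ} (h : beerInit E B T x tα tω w ≤ (c : EReal)) :
    w ∈ B ∧ ∃ time ∈ T w, eaArr E x tα tω w ≤ (time : EReal) ∧ time ≤ tω ∧ time ≤ c := by
  by_cases hw : w ∈ B
  swap
  · rw [beerInit, if_neg hw, top_le_iff] at h
    exact absurd h (EReal.coe_ne_top c)
  refine ⟨hw, ?_⟩
  rw [beerInit, if_pos hw] at h
  set S : Set EReal := {s : EReal | ∃ time ∈ T w, eaArr E x tα tω w ≤ (time : EReal) ∧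
    time ≤ tω ∧ s = (time : EReal)} with hS
  have hfin : S.Finite := by
    apply Set.Finite.subset ((hT w).image (fun t => ((t : ℝ) : EReal)))
    rintro s ⟨time, htime, -, -, rfl⟩
    exact ⟨time, htime, rfl⟩
  have hne : S.Nonempty := by
    by_contra hcon
    rw [Set.not_nonempty_iff_eq_empty] at hcon
    rw [hcon, sInf_empty, top_le_iff] at h
    exact EReal.coe_ne_top c h
  have hmem : sInf S ∈ S := Set.Nonempty.csInf_mem hne hfin
  rcases hmem with ⟨time, htime, hea, hw2, hval⟩
  rw [hval] at h
  exact ⟨time, htime, hea, hw2, EReal.coe_le_coe_iff.mp h⟩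

/-- The earliest-arrival beer path time from `x` to any vertex `v` within
`[tα, tω]` equals the multiple-source earliest-arrival time to `v` with initial
times `init b = t[b]` for beer vertices and `⊤` elsewhere. -/
theorem stmt13 (E : Set (TEdge V)) (hE : E.Finite) (hpos : ∀ e ∈ E, 0 < e.len)
    (B : Set V) (T : V → Set ℝ) (hT : ∀ b, (T b).Finite)
    (x : V) (tα tω : ℝ) (hαω : tα ≤ tω) :
    ∀ v, beerEaTime E B T x tα tω v =
      sInf {a : EReal | a = beerInit E B T x tα tω v ∨
        ∃ p w, IsPath E w v p ∧ tα ≤ startT p ∧ endT p ≤ tω ∧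
          beerInit E B T x tα tω w ≤ (startT p : EReal) ∧
          a = ((endT p : ℝ) : EReal)} := by
  intro v
  apply le_antisymm
  · -- beerEaTime ≤ sInf RHS
    apply le_sInf
    rintro a (rfl | ⟨p, w, hp, hsp, hep, hinit, rfl⟩)
    · -- a = beerInit v
      by_cases hv : v ∈ B
      swap
      · rw [beerInit, if_neg hv]; exact le_top
      rw [beerInit, if_pos hv]
      apply le_sInf
      rintro s ⟨time, htime, hea, htω, rfl⟩
      have htα : tα ≤ time := by
        have := le_trans (tα_le_eaArr hpos x tα tω v) hea
        exact EReal.coe_le_coe_iff.mp this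
      have hreach := eaArr_reach hE hpos hea
      have hreach' : v = x ∨ ∃ q, IsPath E x v q ∧ tα ≤ startT q ∧ endT q ≤ time := by
        rcases hreach with h | ⟨q, hq, h1, h2, h3⟩
        · exact Or.inl h
        · exact Or.inr ⟨q, hq, h1, h3⟩
      exact sInf_le ⟨v, hv, time, htime, htα, htω, hreach', Or.inl ⟨rfl, rfl⟩⟩
    · -- a = endT p for path w → v
      obtain ⟨hwB, time, htime, hea, htω, htsp⟩ := beerInit_reach hT hinit
      have htα : tα ≤ time := by
        have := le_trans (tα_le_eaArr hpos x tα tω w) hea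
        exact EReal.coe_le_coe_iff.mp this
      have hreach := eaArr_reach hE hpos hea
      have hreach' : w = x ∨ ∃ q, IsPath E x w q ∧ tα ≤ startT q ∧ endT q ≤ time := by
        rcases hreach with h | ⟨q, hq, h1, h2, h3⟩
        · exact Or.inl h
        · exact Or.inr ⟨q, hq, h1, h3⟩
      exact sInf_le ⟨w, hwB, time, htime, htα, htω, hreach',
        Or.inr ⟨p, hp, htsp, hep, rfl⟩⟩
  · -- sInf RHS ≤ beerEaTime
    apply le_sInf
    rintro a ⟨b, hbB, t, htb, htα, htω, hreach, hcase⟩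
    have hea : eaArr E x tα tω b ≤ (t : EReal) := by
      rcases hreach with rfl | ⟨q, hq, hsq, heq⟩
      · exact le_trans (sInf_le (Or.inl ⟨rfl, rfl⟩)) (EReal.coe_le_coe_iff.mpr htα)
      · exact le_trans (sInf_le (Or.inr ⟨q, hq, hsq, le_trans heq htω, rfl⟩))
          (EReal.coe_le_coe_iff.mpr heq)
    have hinit : beerInit E B T x tα tω b ≤ (t : EReal) := by
      rw [beerInit, if_pos hbB]
      exact sInf_le ⟨t, htb, hea, htω, rfl⟩
    rcases hcase with ⟨rfl, rfl⟩ | ⟨r, hr, hsr, her, rfl⟩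
    · exact le_trans (sInf_le (Or.inl rfl)) hinit
    · exact sInf_le (Or.inr ⟨r, b, hr, le_trans htα hsr, her,
        le_trans hinit (EReal.coe_le_coe_iff.mpr hsr), rfl⟩)
end

section
/- Replacing a prefix of a multiple-source earliest-arrival path (MSEAP) to y with any MSEAP to the prefix's endpoint yields a valid temporal path that is still a MSEAP to y, and in which the arrival times at all vertices of the retained suffix are unchanged. -/
open scoped Classical

variable {V : Type}

def IsMSEAP (E : Set (TEdge V)) (init : V → EReal) (p : List (TEdge V)) (y : V) : Prop :=
  (∃ x, IsPath E x y p ∧ init x ≤ (startT p : EReal)) ∧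
  ∀ p' x', IsPath E x' y p' → init x' ≤ (startT p' : EReal) → endT p ≤ endT p'

lemma endT_append_right (A B : List (TEdge V)) (hB : B ≠ []) :
    endT (A ++ B) = endT B := by
  unfold endT
  rw [List.getLast?_append, Option.or_of_isSome (by simpa using hB)]

lemma startT_append_left (A B : List (TEdge V)) (hA : A ≠ []) :
    startT (A ++ B) = startT A := by
  unfold startT
  rw [List.head?_append, Option.or_of_isSome (by simpa using hA)]

/-- Replacing a prefix `A` of a MSEAP `A ++ C` to `y` with any MSEAP `Q` to the
prefix's endpoint `w` yields a valid temporal path that is still a MSEAP to `y`,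
with unchanged arrival times along the retained suffix `C`. -/
theorem stmt17 (E : Set (TEdge V)) (init : V → EReal) (y w : V)
    (A C Q : List (TEdge V))
    (hA : A ≠ []) (hw : A.getLast?.map TEdge.dst = some w)
    (hP : IsMSEAP E init (A ++ C) y)
    (hQ : IsMSEAP E init Q w) :
    List.Chain' compat (Q ++ C) ∧ IsMSEAP E init (Q ++ C) y ∧
    ∀ D, D ≠ [] → D <+: C → endT (Q ++ D) = endT (A ++ D) := by
  obtain ⟨⟨x, hPx, hPi⟩, hPmin⟩ := hP
  obtain ⟨⟨xq, hQx, hQi⟩, hQmin⟩ := hQ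
  obtain ⟨hne, hE, hhead, hlast, hchain⟩ := hPx
  obtain ⟨hQne, hQE, hQhead, hQlast, hQchain⟩ := hQx
  replace hchain := List.isChain_append.mp hchain
  obtain ⟨hcA, hcC, hlink⟩ := hchain
  -- A is a path to w
  have hApath : IsPath E x w A := by
    refine ⟨hA, fun e he => hE e (List.mem_append_left _ he), ?_, hw, hcA⟩
    rwa [List.head?_append, Option.or_of_isSome (by simpa using hA)] at hhead
  have hstartA : init x ≤ (startT A : EReal) := by
    rwa [startT_append_left A C hA] at hPi
  have hQA : endT Q ≤ endT A := hQmin A x hApath hstartA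
  -- last edges
  obtain ⟨a, haA⟩ : ∃ a, A.getLast? = some a := by
    cases h : A.getLast? with
    | none => exact absurd (List.getLast?_eq_none_iff.mp h) hA
    | some a => exact ⟨a, rfl⟩
  obtain ⟨q, hqQ⟩ : ∃ q, Q.getLast? = some q := by
    cases h : Q.getLast? with
    | none => exact absurd (List.getLast?_eq_none_iff.mp h) hQne
    | some q => exact ⟨q, rfl⟩
  have hadst : a.dst = w := by rw [haA] at hw; simpa using hw
  have hqdst : q.dst = w := by rw [hqQ] at hQlast; simpa using hQlast
  have hendA : endT A = a.t + a.len := by simp [endT, haA]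
  have hendQ : endT Q = q.t + q.len := by simp [endT, hqQ]
  -- link between Q and C
  have hlink' : ∀ e ∈ Q.getLast?, ∀ f ∈ C.head?, compat e f := by
    intro e he f hf
    rw [hqQ, Option.mem_some_iff] at he
    subst he
    have h1 : compat a f := hlink a (by simp [haA]) f hf
    exact ⟨hqdst.trans (hadst ▸ h1.1),
      le_trans (by rw [← hendQ, ← hendA]; exact hQA) h1.2⟩
  have hchainQC : List.Chain' compat (Q ++ C) :=
    List.isChain_append.mpr ⟨hQchain, hcC, hlink'⟩
  -- y = w when C = []
  have hQCne : Q ++ C ≠ [] := by simp [hQne]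
  have hQCpath : IsPath E xq y (Q ++ C) := by
    refine ⟨hQCne, fun e he => ?_, ?_, ?_, hchainQC⟩
    · rcases List.mem_append.mp he with h | h
      · exact hQE e h
      · exact hE e (List.mem_append_right _ h)
    · rwa [List.head?_append, Option.or_of_isSome (by simpa using hQne)]
    · cases hC : C with
      | nil =>
        have hyw : w = y := by
          rw [hC, List.append_nil, haA] at hlast
          simp at hlast
          rw [← hadst, hlast]
        rw [List.append_nil, hqQ]
        simp [hqdst, hyw]
      | cons c cs =>
        have hCne : C ≠ [] := by simp [hC]
        rw [← hC]
        rw [List.getLast?_append, Option.or_of_isSome (by simpa using hCne)]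
        rwa [List.getLast?_append, Option.or_of_isSome (by simpa using hCne)] at hlast
  have hstartQC : init xq ≤ (startT (Q ++ C) : EReal) := by
    rwa [startT_append_left Q C hQne]
  refine ⟨hchainQC, ⟨⟨xq, hQCpath, hstartQC⟩, ?_⟩, ?_⟩
  · intro p' x' hp' hx'
    cases hC : C with
    | nil =>
      have hyw : w = y := by
        rw [hC, List.append_nil, haA] at hlast
        simp at hlast
        rw [← hadst, hlast]
      rw [List.append_nil]
      exact hQmin p' x' (hyw ▸ hp') hx'
    | cons c cs =>
      have hCne : C ≠ [] := by simp [hC]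
      rw [← hC, endT_append_right Q C hCne, ← endT_append_right A C hCne]
      exact hPmin p' x' hp' hx'
  · intro D hD _
    rw [endT_append_right Q D hD, endT_append_right A D hD]
end
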